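/- Let g₁,…,g_s and f₁,…,f_m be polynomials in MvPolynomial (Fin n) ℂ, let x ∈ ℂⁿ, and let T ⊆ ℂⁿ be a ℂ-linear subspace with dim_ℂ T = k. Assume that the ℂ-linear span of the gradient vectors ∇g_j(x) := (∂g_j/∂x₁(x),…,∂g_j/∂xₙ(x)) for j = 1,…,s equals the annihilator {ξ ∈ ℂⁿ : Σᵢ ξᵢ vᵢ = 0 for all v ∈ T} of T with respect to the standard bilinear form. Let L : T → ℂᵐ be the linear map v ↦ (Σᵢ ∂f₁/∂xᵢ(x)·vᵢ, …, Σᵢ ∂f_m/∂xᵢ(x)·vᵢ). Then for every i with 0 ≤ i, the rank of L is at most i if and only if every ((n−k)+i+1) × ((n−k)+i+1) minor of the augmented n × (s+m) matrix A(x) := [M_G(x) | J_f(x)ᵀ] vanishes, where M_G(x) is the n × s matrix whose j-th column is ∇g_j(x) and J_f(x)ᵀ is the n × m matrix whose j-th column is ∇f_j(x). -/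

import Mathlib

open MvPolynomial

open Matrix Module Submodule in
private lemma my_rank_submatrix_rows_le {I I' C : Type*} [Fintype I] [Fintype I'] [Fintype C]
    (A : Matrix I C ℂ) (f : I' → I) :
    (A.submatrix f id).rank ≤ A.rank := by
  have h : (A.submatrix f id).mulVecLin = (LinearMap.funLeft ℂ ℂ f).comp A.mulVecLin := by
    apply LinearMap.ext; intro v; rfl
  rw [Matrix.rank, h, LinearMap.range_comp, Matrix.rank]
  exact Submodule.finrank_map_le _ _

open Matrix Module Submodule in
private lemma my_rank_submatrix_le {I I' C C' : Type*} [Fintype I] [Fintype I'] [Fintype C]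
    [Fintype C'] (A : Matrix I C ℂ) (f : I' → I) (g : C' → C) :
    (A.submatrix f g).rank ≤ A.rank := by
  have h1 : (A.submatrix f g) = (A.submatrix id g).submatrix f id := rfl
  have h2 : (A.submatrix id g) = (Aᵀ.submatrix g id)ᵀ := by
    rw [Matrix.transpose_submatrix, Matrix.transpose_transpose]
  calc (A.submatrix f g).rank ≤ (A.submatrix id g).rank := by
        rw [h1]; exact my_rank_submatrix_rows_le _ f
    _ = (Aᵀ.submatrix g id).rank := by rw [h2, Matrix.rank_transpose]
    _ ≤ Aᵀ.rank := my_rank_submatrix_rows_le _ g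
    _ = A.rank := Matrix.rank_transpose _

open Matrix Module Submodule in
private lemma my_exists_indep_cols {I C : Type*} [Fintype I] [Fintype C]
    (A : Matrix I C ℂ) (r : ℕ) (h : r + 1 ≤ A.rank) :
    ∃ cols : Fin (r + 1) → C, Function.Injective cols ∧
      LinearIndependent ℂ (fun a => Aᵀ (cols a)) := by
  obtain ⟨b, hbsub, hbspan, hbind⟩ := exists_linearIndependent ℂ (Set.range Aᵀ)
  have hbfin : b.Finite := hbind.setFinite
  haveI : Fintype b := hbfin.fintype
  have hcard : r + 1 ≤ Fintype.card b := by
    have h1 : finrank ℂ (span ℂ b) = b.toFinset.card := finrank_span_set_eq_card hbind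
    have h2 : A.rank = finrank ℂ (span ℂ b) := by
      rw [Matrix.rank_eq_finrank_span_cols, Matrix.col, hbspan]
    rw [Set.toFinset_card] at h1
    omega
  obtain ⟨emb⟩ : Nonempty (Fin (r + 1) ↪ b) :=
    Function.Embedding.nonempty_of_card_le (by simpa using hcard)
  have hmem : ∀ a : Fin (r + 1), ((emb a : b) : I → ℂ) ∈ Set.range Aᵀ := fun a => hbsub (emb a).2
  choose cols hcols using hmem
  refine ⟨cols, ?_, ?_⟩
  · intro a a' haa
    have : ((emb a : b) : I → ℂ) = ((emb a' : b) : I → ℂ) := by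
      rw [← hcols a, ← hcols a', haa]
    exact emb.injective (Subtype.ext this)
  · have : (fun a => Aᵀ (cols a)) = (fun y : b => (y : I → ℂ)) ∘ emb := by
      funext a; rw [hcols a]; rfl
    rw [this]
    exact hbind.comp emb emb.injective

open Matrix Module Submodule in
private lemma my_det_ne_zero_of_rows_indep {p : ℕ} (M : Matrix (Fin p) (Fin p) ℂ)
    (h : LinearIndependent ℂ (fun i => M i)) : M.det ≠ 0 := by
  intro hdet
  obtain ⟨v, hv, hv0⟩ := Matrix.exists_vecMul_eq_zero_iff.mpr hdet
  apply hv
  have hsum : ∑ i, v i • M i = 0 := by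
    funext j
    have := congr_fun hv0 j
    simpa [Matrix.vecMul, dotProduct] using this
  have := (Fintype.linearIndependent_iff.mp h) v hsum
  funext i; exact this i

open Matrix Module Submodule in
private lemma my_rank_le_iff_minors {I C : Type*} [Fintype I] [Fintype C] [DecidableEq I]
    [DecidableEq C] (A : Matrix I C ℂ) (r : ℕ) :
    A.rank ≤ r ↔ ∀ (rows : Fin (r + 1) → I) (cols : Fin (r + 1) → C),
      Function.Injective rows → Function.Injective cols →
      (A.submatrix rows cols).det = 0 := by
  constructor
  · intro h rows cols _ _
    by_contra hdet
    have hunit : IsUnit (A.submatrix rows cols) :=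
      (Matrix.isUnit_iff_isUnit_det _).mpr (Ne.isUnit hdet)
    have h1 := Matrix.rank_of_isUnit _ hunit
    have h2 := my_rank_submatrix_le A rows cols
    rw [h1, Fintype.card_fin] at h2
    omega
  · intro h
    by_contra hrank
    push_neg at hrank
    obtain ⟨cols, hcinj, hcind⟩ := my_exists_indep_cols A r hrank
    set A₁ := A.submatrix id cols with hA₁def
    have hA₁rank : A₁.rank = r + 1 := by
      have he : A₁ᵀ = fun a => Aᵀ (cols a) := rfl
      rw [Matrix.rank_eq_finrank_span_cols, Matrix.col, he, finrank_span_eq_card hcind, Fintype.card_fin]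
    have h2 : r + 1 ≤ (A₁ᵀ).rank := by rw [Matrix.rank_transpose, hA₁rank]
    obtain ⟨rows, hrinj, hrind⟩ := my_exists_indep_cols A₁ᵀ r h2
    have hrind' : LinearIndependent ℂ (fun a => (A.submatrix rows cols) a) := hrind
    exact my_det_ne_zero_of_rows_indep _ hrind' (h rows cols hrinj hcinj)

/-- The dot-product bilinear form on `Fin n → ℂ`. -/
private noncomputable def dotB (n : ℕ) : LinearMap.BilinForm ℂ (Fin n → ℂ) :=
  LinearMap.mk₂ ℂ (fun u v => ∑ p, u p * v p)
    (fun u u' v => by simp [add_mul, Finset.sum_add_distrib])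
    (fun c u v => by simp [Finset.mul_sum, mul_assoc])
    (fun u v v' => by simp [mul_add, Finset.sum_add_distrib])
    (fun c u v => by simp [Finset.mul_sum, mul_left_comm, mul_assoc, mul_comm])

private lemma dotB_apply {n : ℕ} (u v : Fin n → ℂ) : dotB n u v = ∑ p, u p * v p := rfl

private lemma dotB_symm (n : ℕ) : (dotB n).IsSymm := by
  refine ⟨fun u v => ?_⟩
  simp [dotB_apply, mul_comm]

private lemma dotB_nondeg (n : ℕ) : (dotB n).Nondegenerate := by
  refine ⟨fun u hu => ?_, fun u hu => ?_⟩ <;>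
  funext p <;>
  have := hu (Pi.single p 1) <;>
  simpa [dotB_apply, Pi.single_apply, mul_ite, ite_mul, Finset.sum_ite_eq'] using this

set_option maxHeartbeats 1000000 in
set_option synthInstance.maxHeartbeats 1000000 in
theorem rank_drop_iff_minors_vanish (n s m k : ℕ)
    (g : Fin s → MvPolynomial (Fin n) ℂ) (f : Fin m → MvPolynomial (Fin n) ℂ)
    (x : Fin n → ℂ) (T : Submodule ℂ (Fin n → ℂ))
    (hdim : Module.finrank ℂ T = k)
    -- the span of the gradients of the `g j` at `x` is the annihilator of `T`
    (hgrad : (Submodule.span ℂ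
        (Set.range fun j : Fin s => fun i : Fin n => eval x (pderiv i (g j))) :
          Set (Fin n → ℂ)) =
        {ξ : Fin n → ℂ | ∀ v ∈ T, ∑ i, ξ i * v i = 0})
    -- the `n × s` matrix whose `j`-th column is `∇ g j (x)`
    (MG : Matrix (Fin n) (Fin s) ℂ) (hMG : ∀ p j, MG p j = eval x (pderiv p (g j)))
    -- the `n × m` matrix whose `j`-th column is `∇ f j (x)`
    (JfT : Matrix (Fin n) (Fin m) ℂ) (hJfT : ∀ p j, JfT p j = eval x (pderiv p (f j)))
    -- the linear map `L : T → ℂᵐ`, `v ↦ (Σᵢ ∂fⱼ/∂xᵢ(x) • vᵢ)ⱼ`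
    (L : T →ₗ[ℂ] (Fin m → ℂ))
    (hL : ∀ (v : T) (j : Fin m), L v j = ∑ i, eval x (pderiv i (f j)) * (v : Fin n → ℂ) i) :
    ∀ i : ℕ,
      Module.finrank ℂ (LinearMap.range L) ≤ i ↔
        ∀ (rows : Fin ((n - k) + i + 1) → Fin n)
          (cols : Fin ((n - k) + i + 1) → (Fin s ⊕ Fin m)),
          Function.Injective rows → Function.Injective cols →
          ((Matrix.fromCols MG JfT).submatrix rows cols).det = 0 := by
  classical
  intro i
  set B := dotB n with hBdef
  have hrefl : B.IsRefl := (dotB_symm n).isRefl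
  have hnd : B.Nondegenerate := dotB_nondeg n
  have hVn : Module.finrank ℂ (Fin n → ℂ) = n := by
    simp [Module.finrank_fintype_fun_eq_card]
  have hk : k ≤ n := by
    have h1 : Module.finrank ℂ T ≤ Module.finrank ℂ (Fin n → ℂ) := Submodule.finrank_le T
    rw [hdim, hVn] at h1
    exact h1
  set gcol : Fin s → (Fin n → ℂ) := fun j p => eval x (pderiv p (g j)) with hgcol
  set fcol : Fin m → (Fin n → ℂ) := fun j p => eval x (pderiv p (f j)) with hfcol
  set W : Submodule ℂ (Fin n → ℂ) := Submodule.span ℂ (Set.range gcol) with hWdef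
  set U : Submodule ℂ (Fin n → ℂ) := Submodule.span ℂ (Set.range fcol) with hUdef
  -- `W` is the orthogonal complement of `T`
  have hWT : W = B.orthogonal T := by
    apply SetLike.ext'
    rw [show (W : Set (Fin n → ℂ)) = {ξ : Fin n → ℂ | ∀ v ∈ T, ∑ p, ξ p * v p = 0} from hgrad]
    ext ξ
    simp only [Set.mem_setOf_eq, SetLike.mem_coe, LinearMap.BilinForm.mem_orthogonal_iff,
      LinearMap.BilinForm.isOrtho_def]
    constructor
    · intro h v hv
      rw [dotB_apply]
      calc ∑ p, v p * ξ p = ∑ p, ξ p * v p := by simp [mul_comm]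
        _ = 0 := h v hv
    · intro h v hv
      have := h v hv
      rw [dotB_apply] at this
      calc ∑ p, ξ p * v p = ∑ p, v p * ξ p := by simp [mul_comm]
        _ = 0 := this
  have hWdim : Module.finrank ℂ W = n - k := by
    rw [hWT, LinearMap.BilinForm.finrank_orthogonal hnd, hVn, hdim]
  have horthW : B.orthogonal W = T := by
    rw [hWT]; exact LinearMap.BilinForm.orthogonal_orthogonal hnd hrefl T
  -- orthogonal of sup is inf of orthogonals
  have horth_sup : B.orthogonal (W ⊔ U) = T ⊓ B.orthogonal U := by
    rw [← horthW]
    apply le_antisymm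
    · exact le_inf (LinearMap.BilinForm.orthogonal_le le_sup_left)
        (LinearMap.BilinForm.orthogonal_le le_sup_right)
    · intro v hv
      rw [LinearMap.BilinForm.mem_orthogonal_iff]
      intro u hu
      obtain ⟨w, hw, u', hu', rfl⟩ := Submodule.mem_sup.mp hu
      have h1 : B w v = 0 := hv.1 w hw
      have h2 : B u' v = 0 := hv.2 u' hu'
      simp [LinearMap.BilinForm.isOrtho_def, map_add, LinearMap.add_apply, h1, h2]
  -- the linear map given by the Jacobian of `f`
  set φ : (Fin n → ℂ) →ₗ[ℂ] (Fin m → ℂ) := (JfT.transpose).mulVecLin with hφdef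
  have hφ : ∀ (v : Fin n → ℂ) (j : Fin m), φ v j = ∑ p, eval x (pderiv p (f j)) * v p := by
    intro v j
    simp [hφdef, Matrix.mulVecLin_apply, Matrix.mulVec, Matrix.vecMul, dotProduct, hJfT,
      mul_comm]
  have hLφ : L = φ.comp T.subtype := by
    apply LinearMap.ext; intro v
    funext j
    rw [hL v j, LinearMap.comp_apply, hφ]
    rfl
  have hkerφ : LinearMap.ker φ = B.orthogonal U := by
    ext v
    simp only [LinearMap.mem_ker, LinearMap.BilinForm.mem_orthogonal_iff]
    constructor
    · intro h0 u hu
      have hsub : U ≤ LinearMap.ker (B.flip v) := by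
        rw [hUdef, Submodule.span_le]
        rintro _ ⟨j, rfl⟩
        have : B (fcol j) v = 0 := by
          rw [dotB_apply]
          have := congr_fun h0 j
          rw [hφ] at this
          simpa [hfcol] using this
        simpa [LinearMap.mem_ker, LinearMap.flip_apply] using this
      have := hsub hu
      simpa [LinearMap.mem_ker, LinearMap.flip_apply, LinearMap.BilinForm.isOrtho_def] using this
    · intro h
      funext j
      have : B (fcol j) v = 0 := h (fcol j) (Submodule.subset_span ⟨j, rfl⟩)
      rw [dotB_apply] at this
      rw [hφ]
      simpa [hfcol] using this
  -- rank of the big matrix is the dimension of `W ⊔ U`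
  have hA : (Matrix.fromCols MG JfT).rank = Module.finrank ℂ (W ⊔ U : Submodule ℂ (Fin n → ℂ)) := by
    have he : (Matrix.fromCols MG JfT).transpose = Sum.elim gcol fcol := by
      funext j p
      cases j with
      | inl a => simp [Matrix.transpose_apply, Matrix.fromCols, hMG, hgcol]
      | inr b => simp [Matrix.transpose_apply, Matrix.fromCols, hJfT, hfcol]
    have hspan : Submodule.span ℂ (Set.range (Matrix.fromCols MG JfT).transpose) = W ⊔ U := by
      rw [he, Set.Sum.elim_range, Submodule.span_union]
    rw [Matrix.rank_eq_finrank_span_cols, Matrix.col, hspan]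
  -- dimension bookkeeping
  set R : ℕ := Module.finrank ℂ (W ⊔ U : Submodule ℂ (Fin n → ℂ)) with hRdef
  have hR_le : R ≤ n := by
    have h1 : Module.finrank ℂ (W ⊔ U : Submodule ℂ (Fin n → ℂ)) ≤ Module.finrank ℂ (Fin n → ℂ) :=
      Submodule.finrank_le _
    rw [hVn] at h1
    exact h1
  have hR_ge : n - k ≤ R := by
    rw [hRdef, ← hWdim]; exact Submodule.finrank_mono le_sup_left
  have hinf_dim : Module.finrank ℂ (T ⊓ B.orthogonal U : Submodule ℂ (Fin n → ℂ)) = n - R := by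
    rw [← horth_sup, LinearMap.BilinForm.finrank_orthogonal hnd, hVn]
  have hkerL : Module.finrank ℂ (LinearMap.ker L) = n - R := by
    have h5 : LinearMap.ker L = Submodule.comap T.subtype (LinearMap.ker φ ⊓ T) := by
      rw [hLφ, LinearMap.ker_comp]
      ext ⟨v, hv⟩
      simp [Submodule.mem_comap, Submodule.mem_inf, hv]
    have h6 : Module.finrank ℂ ↥(Submodule.comap T.subtype (LinearMap.ker φ ⊓ T)) =
        Module.finrank ℂ ↥(LinearMap.ker φ ⊓ T) :=
      (Submodule.comapSubtypeEquivOfLe inf_le_right).finrank_eq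
    rw [h5, h6, hkerφ, inf_comm, hinf_dim]
  have hrangeL : Module.finrank ℂ (LinearMap.range L) + (n - R) = k := by
    rw [← hkerL, LinearMap.finrank_range_add_finrank_ker L, hdim]
  -- put everything together
  rw [show (n - k) + i + 1 = ((n - k) + i) + 1 from rfl,
    ← my_rank_le_iff_minors (Matrix.fromCols MG JfT) ((n - k) + i), hA]
  omega
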